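/- (Gale's lemma) For all positive integers n' and m there exist 2n' + m points on the unit sphere S^m ⊂ ℝ^{m+1} such that every open half-space determined by a hyperplane through the origin contains at least n' of the points. -/

import Mathlib

open Finset Polynomial

/-- Key combinatorial lemma on sign sequences. -/
lemma signseq : ∀ (N : ℕ) (v : ℕ → ℝ), (∀ i < N, v i ≠ 0) →
    N ≤ 2 * (∑ i ∈ range N, if 0 < (-1:ℝ)^i * v i then 1 else 0)
      + (∑ i ∈ range (N-1), if v i * v (i+1) < 0 then 1 else 0)
      + (if 0 < v 0 then 0 else 1) := by
  intro N
  induction N with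
  | zero => intro v _; simp
  | succ N ih =>
    intro v hv
    obtain _ | M := N
    · -- base case N = 1
      rcases lt_or_gt_of_ne (hv 0 (by norm_num)) with h | h
      · rw [Finset.sum_range_one]
        simp [h, not_lt.2 h.le]
      · rw [Finset.sum_range_one]
        simp [h]
    · -- inductive step
      set v' : ℕ → ℝ := fun i => -v (i+1) with hv'
      have hvne : ∀ i < M + 1, v' i ≠ 0 := by
        intro i hi
        simp only [hv', neg_ne_zero]
        exact hv (i+1) (by omega)
      have H := ih v' hvne
      have key : ∀ i : ℕ, (-1:ℝ)^(i+1) * v (i+1) = (-1)^i * v' i := by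
        intro i; simp only [hv', pow_succ]; ring
      have S1 : (∑ i ∈ range (M+2), if 0 < (-1:ℝ)^i * v i then (1:ℕ) else 0)
          = (∑ i ∈ range (M+1), if 0 < (-1:ℝ)^i * v' i then (1:ℕ) else 0)
            + (if 0 < v 0 then 1 else 0) := by
        rw [Finset.sum_range_succ' (fun i => if 0 < (-1:ℝ)^i * v i then (1:ℕ) else 0) (M+1)]
        congr 1
        · exact Finset.sum_congr rfl fun i _ => by rw [key i]
        · norm_num
      have key2 : ∀ i : ℕ, v' i * v' (i+1) = v (i+1) * v (i+2) := by
        intro i; simp only [hv']; ring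
      have S2 : (∑ i ∈ range (M+1), if v i * v (i+1) < 0 then (1:ℕ) else 0)
          = (∑ i ∈ range M, if v' i * v' (i+1) < 0 then (1:ℕ) else 0)
            + (if v 0 * v 1 < 0 then 1 else 0) := by
        rw [Finset.sum_range_succ' (fun i => if v i * v (i+1) < 0 then (1:ℕ) else 0) M]
        congr 1
        exact Finset.sum_congr rfl fun i _ => by rw [key2 i]
      have hb' : (if 0 < v' 0 then (0:ℕ) else 1) = (if 0 < -v 1 then 0 else 1) := by
        simp [hv']
      show M + 1 + 1 ≤ _
      rw [show (M+1+1-1) = M+1 from rfl, S1, S2]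
      rw [hb'] at H
      simp only [Nat.add_sub_cancel] at H
      rcases lt_or_gt_of_ne (hv 0 (by omega)) with h0 | h0 <;>
        rcases lt_or_gt_of_ne (hv 1 (by omega)) with h1 | h1 <;>
          split_ifs at H ⊢ <;> first | omega | nlinarith | linarith

/-- Each sign change of a polynomial along an increasing sequence yields a distinct root. -/
lemma sign_changes_le_roots (q : Polynomial ℝ) (hq : q ≠ 0) (t : ℕ → ℝ)
    (ht : StrictMono t) (N : ℕ) :
    (∑ i ∈ range N, if q.eval (t i) * q.eval (t (i+1)) < 0 then 1 else 0)
      ≤ q.roots.toFinset.card := by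
  rw [← Finset.card_filter]
  set s := (range N).filter (fun i => q.eval (t i) * q.eval (t (i+1)) < 0) with hs
  have hroot : ∀ i ∈ s, ∃ r ∈ Set.Ioo (t i) (t (i+1)), q.eval r = 0 := by
    intro i hi
    rw [hs, Finset.mem_filter] at hi
    have hlt : t i < t (i+1) := ht (by omega)
    have hcont : ContinuousOn (fun x => q.eval x) (Set.Icc (t i) (t (i+1))) :=
      (q.continuous_aeval).continuousOn
    rcases mul_neg_iff.1 hi.2 with ⟨ha, hb⟩ | ⟨ha, hb⟩
    · -- eval (t i) > 0 > eval (t (i+1))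
      have := intermediate_value_Ioo' hlt.le hcont
        (show (0:ℝ) ∈ Set.Ioo (q.eval (t (i+1))) (q.eval (t i)) from ⟨hb, ha⟩)
      obtain ⟨r, hr, hr0⟩ := this
      exact ⟨r, hr, hr0⟩
    · have := intermediate_value_Ioo hlt.le hcont
        (show (0:ℝ) ∈ Set.Ioo (q.eval (t i)) (q.eval (t (i+1))) from ⟨ha, hb⟩)
      obtain ⟨r, hr, hr0⟩ := this
      exact ⟨r, hr, hr0⟩
  choose r hr hr0 using hroot
  apply Finset.card_le_card_of_injOn (fun i => if h : i ∈ s then r i h else 0)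
  · intro i hi
    simp only [Finset.mem_coe] at hi ⊢
    rw [dif_pos hi, Multiset.mem_toFinset, mem_roots hq]
    exact hr0 i hi
  · intro i hi j hj hij
    rw [Finset.mem_coe] at hi hj
    simp only [dif_pos hi, dif_pos hj] at hij
    by_contra hne
    rcases Nat.lt_or_ge i j with h | h
    · have h1 : r i hi < t (i+1) := (hr i hi).2
      have h2 : t j < r j hj := (hr j hj).1
      have : t (i+1) ≤ t j := ht.le_iff_le.2 (by omega)
      linarith [hij ▸ h1]
    · have h' : j < i := by omega
      have h1 : r j hj < t (j+1) := (hr j hj).2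
      have h2 : t i < r i hi := (hr i hi).1
      have : t (j+1) ≤ t i := ht.le_iff_le.2 (by omega)
      linarith [hij ▸ h1]

lemma poly_count_nz (n' m N : ℕ) (hN : N = 2*n'+m) (q : Polynomial ℝ) (hq : q ≠ 0)
    (hd : q.natDegree ≤ m) (hnz : ∀ i < N, q.eval (i:ℝ) ≠ 0) :
    n' ≤ ∑ i ∈ range N, if 0 < (-1:ℝ)^i * q.eval (i:ℝ) then 1 else 0 := by
  have h1 := signseq N (fun i => q.eval (i:ℝ)) hnz
  have h2 := sign_changes_le_roots q hq (fun i => (i:ℝ))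
    (fun a b hab => by exact_mod_cast Nat.cast_lt.2 hab) (N-1)
  have h3 : q.roots.toFinset.card ≤ m := by
    calc q.roots.toFinset.card ≤ Multiset.card q.roots := q.roots.toFinset_card_le
    _ ≤ q.natDegree := q.card_roots'
    _ ≤ m := hd
  have h4 : (if 0 < q.eval (0:ℝ) then (0:ℕ) else 1) ≤ 1 := by split_ifs <;> omega
  push_cast at h1 h2
  omega

/-- sign preservation under small perturbation -/
lemma sign_pres (c a b : ℝ) (hc : |c| = 1) (hab : |b - a| < |a|) (hb : 0 < c * b) :
    0 < c * a := by
  by_contra hna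
  push_neg at hna
  have h5 : c * (b - a) ≤ |b - a| := by
    calc c * (b - a) ≤ |c * (b - a)| := le_abs_self _
    _ = |c| * |b - a| := abs_mul _ _
    _ = |b - a| := by rw [hc, one_mul]
  have h6 : |a| = -(c * a) := by
    rw [← abs_of_nonpos hna, abs_mul, hc, one_mul]
  nlinarith

lemma poly_count (n' m N : ℕ) (hN : N = 2*n'+m) (q : Polynomial ℝ) (hq : q ≠ 0)
    (hd : q.natDegree ≤ m) :
    n' ≤ ∑ i ∈ range N, if 0 < (-1:ℝ)^i * q.eval (i:ℝ) then 1 else 0 := by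
  set Z := (range N).filter (fun i : ℕ => q.eval (i:ℝ) = 0) with hZ
  rcases Z.eq_empty_or_nonempty with hZe | hZne
  · refine poly_count_nz n' m N hN q hq hd (fun i hi hzero => ?_)
    have : i ∈ Z := by rw [hZ, Finset.mem_filter]; exact ⟨Finset.mem_range.2 hi, hzero⟩
    rw [hZe] at this; exact absurd this (Finset.notMem_empty i)
  · -- perturbation
    have hinj : Set.InjOn (fun i : ℕ => (i:ℝ)) Z := fun a _ b _ hab => Nat.cast_injective hab
    set h : Polynomial ℝ := Lagrange.interpolate Z (fun i : ℕ => (i:ℝ)) (fun i => (-1:ℝ)^i)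
      with hh
    have hhval : ∀ i ∈ Z, h.eval (i:ℝ) = (-1:ℝ)^i := fun i hi =>
      Lagrange.eval_interpolate_at_node _ hinj hi
    have hZcard : Z.card ≤ m := by
      have : Z.card ≤ q.roots.toFinset.card := by
        apply Finset.card_le_card_of_injOn (fun i : ℕ => (i:ℝ))
        · intro i hi
          rw [Finset.mem_coe, hZ, Finset.mem_filter] at hi
          rw [Finset.mem_coe, Multiset.mem_toFinset, mem_roots hq]
          exact hi.2
        · exact fun a _ b _ hab => Nat.cast_injective hab
      calc Z.card ≤ q.roots.toFinset.card := this
      _ ≤ Multiset.card q.roots := q.roots.toFinset_card_le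
      _ ≤ q.natDegree := q.card_roots'
      _ ≤ m := hd
    have hhd : h.natDegree ≤ m := by
      have h1 : h.degree < (Z.card : WithBot ℕ) := Lagrange.degree_interpolate_lt _ hinj
      have h2 : h.degree ≤ (m : WithBot ℕ) := le_trans h1.le (by exact_mod_cast hZcard)
      exact natDegree_le_iff_degree_le.2 h2
    -- choose epsilon
    set s := (range N).filter (fun i : ℕ => q.eval (i:ℝ) ≠ 0) with hs
    set g : ℕ → ℝ := fun i => |q.eval (i:ℝ)| / (1 + |h.eval (i:ℝ)|) with hg
    set E := insert (1:ℝ) (s.image g) with hE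
    have hEne : E.Nonempty := Finset.insert_nonempty _ _
    set ε := E.min' hEne with hε
    have hεpos : 0 < ε := by
      have hmem : ε ∈ E := E.min'_mem hEne
      rcases Finset.mem_insert.1 hmem with h1 | h1
      · rw [h1]; norm_num
      · obtain ⟨i, hi, hgi⟩ := Finset.mem_image.1 h1
        have hne := (Finset.mem_filter.1 hi).2
        rw [← hgi, hg]
        exact div_pos (abs_pos.2 hne) (by positivity)
    have hεle : ∀ i ∈ s, ε ≤ g i := fun i hi =>
      Finset.min'_le _ _ (Finset.mem_insert_of_mem (Finset.mem_image_of_mem g hi))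
    set qt : Polynomial ℝ := q - Polynomial.C ε * h with hqt
    have hqtZ : ∀ i ∈ Z, qt.eval (i:ℝ) = -(ε * (-1)^i) := by
      intro i hi
      have hq0 : q.eval (i:ℝ) = 0 := (Finset.mem_filter.1 hi).2
      rw [hqt]
      simp [hq0, hhval i hi]
    have hqtne : qt ≠ 0 := by
      obtain ⟨i₀, hi₀⟩ := hZne
      intro hcon
      have := hqtZ i₀ hi₀
      rw [hcon] at this
      simp only [eval_zero] at this
      have : ε * (-1:ℝ)^i₀ ≠ 0 := by
        apply mul_ne_zero hεpos.ne'
        positivity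
      simp at *
      exact this (by linarith [hqtZ i₀ hi₀])
    have hqtd : qt.natDegree ≤ m := by
      rw [hqt]
      refine le_trans (natDegree_sub_le _ _) ?_
      rw [max_le_iff]
      exact ⟨hd, le_trans (natDegree_C_mul_le _ _) hhd⟩
    have hkey : ∀ i ∈ s, |qt.eval (i:ℝ) - q.eval (i:ℝ)| < |q.eval (i:ℝ)| := by
      intro i hi
      have hne := (Finset.mem_filter.1 hi).2
      have h1 : qt.eval (i:ℝ) - q.eval (i:ℝ) = -(ε * h.eval (i:ℝ)) := by
        rw [hqt]; simp
      rw [h1, abs_neg, abs_mul, abs_of_pos hεpos]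
      have h2 : ε ≤ |q.eval (i:ℝ)| / (1 + |h.eval (i:ℝ)|) := hεle i hi
      have h3 : (0:ℝ) < 1 + |h.eval (i:ℝ)| := by positivity
      have h5 : 0 < |q.eval (i:ℝ)| := abs_pos.2 hne
      calc ε * |h.eval (i:ℝ)|
          ≤ (|q.eval (i:ℝ)| / (1 + |h.eval (i:ℝ)|)) * |h.eval (i:ℝ)| :=
            mul_le_mul_of_nonneg_right h2 (abs_nonneg _)
      _ < |q.eval (i:ℝ)| := by
          rw [div_mul_eq_mul_div, div_lt_iff₀ h3]
          nlinarith [abs_nonneg (h.eval (i:ℝ))]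
    have hqtnz : ∀ i < N, qt.eval (i:ℝ) ≠ 0 := by
      intro i hi
      by_cases hiZ : i ∈ Z
      · rw [hqtZ i hiZ]
        simp only [neg_ne_zero]
        exact mul_ne_zero hεpos.ne' (by positivity)
      · have his : i ∈ s := Finset.mem_filter.2 ⟨Finset.mem_range.2 hi,
          fun hc => hiZ (Finset.mem_filter.2 ⟨Finset.mem_range.2 hi, hc⟩)⟩
        have hdiff := hkey i his
        intro hzero
        rw [hzero] at hdiff
        rw [zero_sub, abs_neg] at hdiff
        exact lt_irrefl _ hdiff
    have hmain := poly_count_nz n' m N hN qt hqtne hqtd hqtnz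
    refine le_trans hmain (Finset.sum_le_sum ?_)
    intro i hi
    by_cases hiZ : i ∈ Z
    · have hval : (-1:ℝ)^i * qt.eval (i:ℝ) = -ε := by
        rw [hqtZ i hiZ]
        have hsq : ((-1:ℝ)^i) * ((-1:ℝ)^i) = 1 := by
          rw [← pow_add]
          exact Even.neg_one_pow ⟨i, by ring⟩
        nlinarith [hsq]
      rw [if_neg (by rw [hval]; linarith)]
      split_ifs <;> omega
    · have his : i ∈ s := Finset.mem_filter.2 ⟨hi,
        fun hc => hiZ (Finset.mem_filter.2 ⟨hi, hc⟩)⟩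
      by_cases hpos : 0 < (-1:ℝ)^i * qt.eval (i:ℝ)
      · have habs1 : |(-1:ℝ)^i| = 1 := by rw [abs_pow, abs_neg, abs_one, one_pow]
        have hq' : 0 < (-1:ℝ)^i * q.eval (i:ℝ) :=
          sign_pres _ _ _ habs1 (hkey i his) hpos
        rw [if_pos hpos, if_pos hq']
      · rw [if_neg hpos]
        split_ifs <;> omega

/-- Gale's lemma: there exist `2n' + m` points on the unit sphere `S^m ⊂ ℝ^(m+1)` such that
every open half-space determined by a hyperplane through the origin contains at least `n'`
of the points. -/
theorem gale_lemma (n' m : ℕ) (hn' : 0 < n') (hm : 0 < m) :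
    ∃ p : Fin (2 * n' + m) → EuclideanSpace ℝ (Fin (m + 1)),
      Function.Injective p ∧ (∀ i, ‖p i‖ = 1) ∧
      ∀ f : EuclideanSpace ℝ (Fin (m + 1)) →ₗ[ℝ] ℝ, f ≠ 0 →
        n' ≤ (Finset.univ.filter fun i => 0 < f (p i)).card := by
  set N := 2 * n' + m with hN
  -- moment curve
  set γ : ℝ → EuclideanSpace ℝ (Fin (m+1)) := fun t => WithLp.toLp 2 (fun j => t ^ (j:ℕ)) with hγ
  have hγ0 : ∀ t : ℝ, γ t 0 = 1 := by intro t; rw [hγ]; simp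
  have hγ1 : ∀ t : ℝ, γ t 1 = t := by
    intro t; rw [hγ]
    show t ^ ((1 : Fin (m+1)) : ℕ) = t
    have h1 : ((1 : Fin (m+1)) : ℕ) = 1 := by
      rw [Fin.val_one']
      exact Nat.mod_eq_of_lt (by omega)
    rw [h1, pow_one]
  have hγne : ∀ t : ℝ, γ t ≠ 0 := by
    intro t hc
    have := hγ0 t
    rw [hc] at this
    simp at this
  have hγpos : ∀ t : ℝ, 0 < ‖γ t‖ := fun t => norm_pos_iff.2 (hγne t)
  set p : Fin N → EuclideanSpace ℝ (Fin (m+1)) :=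
    fun i => ((-1:ℝ)^(i:ℕ) * ‖γ (i:ℕ)‖⁻¹) • γ ((i:ℕ):ℝ) with hp
  have hcoef : ∀ i : Fin N, (-1:ℝ)^(i:ℕ) * ‖γ ((i:ℕ):ℝ)‖⁻¹ ≠ 0 := by
    intro i
    apply mul_ne_zero
    · positivity
    · exact inv_ne_zero (hγpos _).ne'
  refine ⟨p, ?_, ?_, ?_⟩
  · -- injectivity
    intro i j hij
    have h0 : p i 0 = p j 0 := by rw [hij]
    have h1 : p i 1 = p j 1 := by rw [hij]
    rw [hp] at h0 h1
    simp only [PiLp.smul_apply, smul_eq_mul] at h0 h1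
    rw [hγ0, hγ0, mul_one, mul_one] at h0
    rw [hγ1, hγ1] at h1
    rw [h0] at h1
    have := mul_left_cancel₀ (h0 ▸ hcoef j) h1
    exact Fin.ext (Nat.cast_injective this)
  · -- norms
    intro i
    rw [hp]
    rw [norm_smul]
    simp only [norm_mul, norm_pow, norm_neg, norm_one, one_pow, one_mul, norm_inv,
      norm_norm]
    exact inv_mul_cancel₀ (hγpos _).ne'
  · -- main counting
    intro f hf
    set e : Fin (m+1) → EuclideanSpace ℝ (Fin (m+1)) :=
      fun j => EuclideanSpace.single j (1:ℝ) with he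
    have hexpand : ∀ x : EuclideanSpace ℝ (Fin (m+1)), f x = ∑ j, x j * f (e j) := by
      intro x
      have hx : x = ∑ j, x j • e j := by
        ext k
        rw [WithLp.ofLp_sum, Finset.sum_apply]
        simp only [PiLp.smul_apply, smul_eq_mul, he, EuclideanSpace.single_apply]
        rw [Finset.sum_congr rfl (fun j _ => by rw [mul_ite, mul_one, mul_zero])]
        rw [Finset.sum_ite_eq]
        simp
      conv_lhs => rw [hx]
      rw [map_sum]
      simp [map_smul, smul_eq_mul]
    set q : Polynomial ℝ := ∑ j : Fin (m+1), Polynomial.C (f (e j)) * Polynomial.X ^ (j:ℕ)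
      with hq
    have heval : ∀ t : ℝ, q.eval t = f (γ t) := by
      intro t
      rw [hexpand (γ t), hq]
      rw [Polynomial.eval_finset_sum]
      apply Finset.sum_congr rfl
      intro j _
      rw [Polynomial.eval_mul, Polynomial.eval_C, Polynomial.eval_pow, Polynomial.eval_X]
      rw [hγ]
      exact mul_comm _ _
    have hqne : q ≠ 0 := by
      intro hc
      apply hf
      have hcoeff : ∀ j : Fin (m+1), f (e j) = 0 := by
        intro j
        have : q.coeff (j:ℕ) = f (e j) := by
          rw [hq, Polynomial.finset_sum_coeff]
          rw [Finset.sum_eq_single j]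
          · rw [Polynomial.coeff_C_mul, Polynomial.coeff_X_pow, if_pos rfl, mul_one]
          · intro j' _ hjj
            rw [Polynomial.coeff_C_mul, Polynomial.coeff_X_pow,
              if_neg (fun hcc => hjj (Fin.ext hcc.symm)), mul_zero]
          · intro hj; exact absurd (Finset.mem_univ j) hj
        rw [hc, Polynomial.coeff_zero] at this
        exact this.symm
      ext x
      rw [hexpand x]
      simp [hcoeff]
    have hqdeg : q.natDegree ≤ m := by
      rw [hq]
      apply Polynomial.natDegree_sum_le_of_forall_le
      intro j _
      refine le_trans (Polynomial.natDegree_C_mul_le _ _) ?_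
      rw [Polynomial.natDegree_X_pow]
      omega
    have hiff : ∀ i : Fin N, (0 < f (p i)) ↔ (0 < (-1:ℝ)^(i:ℕ) * q.eval ((i:ℕ):ℝ)) := by
      intro i
      rw [hp]
      simp only [map_smul, smul_eq_mul]
      rw [heval]
      constructor
      · intro h
        nlinarith [hγpos (((i:ℕ):ℝ)), inv_pos.2 (hγpos (((i:ℕ):ℝ)))]
      · intro h
        have hpos := inv_pos.2 (hγpos (((i:ℕ):ℝ)))
        nlinarith
    calc n' ≤ ∑ i ∈ range N, if 0 < (-1:ℝ)^i * q.eval (i:ℝ) then 1 else 0 :=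
          poly_count n' m N hN q hqne hqdeg
    _ = ∑ i : Fin N, if 0 < (-1:ℝ)^(i:ℕ) * q.eval ((i:ℕ):ℝ) then 1 else 0 :=
          (Fin.sum_univ_eq_sum_range (fun i => if 0 < (-1:ℝ)^i * q.eval (i:ℝ) then 1 else 0) N).symm
    _ = (Finset.univ.filter fun i => 0 < f (p i)).card := by
          rw [Finset.card_filter]
          exact Finset.sum_congr rfl fun i _ => by simp only [hiff i]
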